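/- Let f : 𝔽₂ⁿ → 𝔽₂, f ≢ 0, have stratified representation f = M₁(M₂(⋯(M_{r-1}(M_r·p_C + 1) + 1)⋯) + 1) + q with layers M₁, …, M_r and core polynomial p_C, and suppose the variable x_j appears in layer M_i with factor (x_j + a_j). Then the restriction of f to x_j = a_j depends only on the variables appearing in the more dominant layers M₁, …, M_{i-1}: f|_{x_j = a_j}(x) = M₁(M₂(⋯(M_{i-1}·0 + 1)⋯) + 1) + q, so f|_{x_j=a_j} is independent of every variable of M_i ∖ {x_j}, of M_{i+1}, …, M_r, and of p_C. In particular, if i = 1 then f|_{x_j = a_j} is the constant q. -/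

import Mathlib

/-- A Boolean function `f` is essential in (depends on) the variable `v` if flipping
the value of `v` can change the value of `f`. -/
def EssentialIn {V : Type*} [DecidableEq V] (f : (V → ZMod 2) → ZMod 2) (v : V) : Prop :=
  ∃ x, f x ≠ f (Function.update x v (x v + 1))

/-- A Boolean function is canalizing if some variable `v` has an input value `a` that
forces the output value `b`. -/
def IsCanalizing {V : Type*} (f : (V → ZMod 2) → ZMod 2) : Prop :=
  ∃ (v : V) (a b : ZMod 2), ∀ x, x v = a → f x = b

/-- The extended monomial on the variable set `S` with constants `a`,
`M(x) = ∏_{j ∈ S} (x_j + a_j)`. -/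
def extMonomial {V : Type*} (S : Finset V) (a : V → ZMod 2) (x : V → ZMod 2) : ZMod 2 :=
  ∏ j ∈ S, (x j + a j)

/-- The nested form `M₁(M₂(⋯(M_{r-1}(M_r·p + 1) + 1)⋯) + 1)` determined by a list of
layers (variable sets) `L`, constants `a`, and a core polynomial `p`. For `L = []` it
is just `p`. -/
def nestedLayers {V : Type*} (a : V → ZMod 2) (p : (V → ZMod 2) → ZMod 2) :
    List (Finset V) → (V → ZMod 2) → ZMod 2
  | [], x => p x
  | [S], x => extMonomial S a x * p x
  | S :: T :: Ss, x => extMonomial S a x * (nestedLayers a p (T :: Ss) x + 1)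

/-- `IsStratification f L a p q` says that
`f = M₁(M₂(⋯(M_{r-1}(M_r·p_C + 1) + 1)⋯) + 1) + q` is a representation of `f` as in
the He–Macauley stratification theorem: the layers `Mᵢ = ∏_{j ∈ Sᵢ} (x_j + a_j)` are
nonconstant extended monomials in pairwise disjoint variable sets, the core polynomial
`p` is independent of all layer variables and is identically `1` or non-canalizing,
and the exceptional-case conditions hold (if `p ≡ 1` and `r ≠ 1` then `k_r ≥ 2`; if
`p ≡ 1`, `r = 1`, `k₁ = 1` then `q = 0`; and for `r = 0` the representation is
`f = p_C`, i.e. `q = 0`). -/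
def IsStratification {V : Type*} [DecidableEq V] (f : (V → ZMod 2) → ZMod 2)
    (L : List (Finset V)) (a : V → ZMod 2) (p : (V → ZMod 2) → ZMod 2) (q : ZMod 2) :
    Prop :=
  (∀ S ∈ L, S.Nonempty) ∧
  L.Pairwise Disjoint ∧
  (∀ S ∈ L, ∀ v ∈ S, ¬ EssentialIn p v) ∧
  (p = (fun _ => 1) ∨ ¬ IsCanalizing p) ∧
  (p = (fun _ => 1) → L.length ≠ 1 → ∀ S ∈ L.getLast?, 2 ≤ S.card) ∧
  (p = (fun _ => 1) → ∀ S, L = [S] → S.card = 1 → q = 0) ∧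
  (L = [] → q = 0) ∧
  f = fun x => nestedLayers a p L x + q

section Aux

variable {V : Type*} [DecidableEq V]

lemma nested_cons (a : V → ZMod 2) (p : (V → ZMod 2) → ZMod 2)
    (S : Finset V) (l : List (Finset V)) (hl : l ≠ []) (x : V → ZMod 2) :
    nestedLayers a p (S :: l) x = extMonomial S a x * (nestedLayers a p l x + 1) := by
  cases l with
  | nil => exact absurd rfl hl
  | cons T Ss => rfl

lemma nested_zero_of_monomial_zero (a : V → ZMod 2) (p : (V → ZMod 2) → ZMod 2) :
    ∀ (l : List (Finset V)) (i : ℕ) (hi : i < l.length) (x : V → ZMod 2),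
    extMonomial (l.get ⟨i, hi⟩) a x = 0 →
    nestedLayers a p l x = nestedLayers a (fun _ => 0) (l.take (i + 1)) x := by
  intro l
  induction l with
  | nil => intro i hi; simp at hi
  | cons S rest ih =>
    intro i hi x hM
    cases i with
    | zero =>
      simp only [List.get] at hM
      have h1 : (S :: rest).take 1 = [S] := by simp
      rw [h1]
      show nestedLayers a p (S :: rest) x = extMonomial S a x * 0
      rw [hM, zero_mul]
      cases rest with
      | nil => show extMonomial S a x * p x = 0; rw [hM, zero_mul]
      | cons T Ss =>
        show extMonomial S a x * _ = 0
        rw [hM, zero_mul]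
    | succ k =>
      have hk : k < rest.length := by simpa using hi
      have hrest : rest ≠ [] := by
        intro hr; rw [hr] at hk; simp at hk
      have hM' : extMonomial (rest.get ⟨k, hk⟩) a x = 0 := by
        simpa using hM
      have htake : rest.take (k + 1) ≠ [] := by
        have : 0 < (rest.take (k + 1)).length := by
          simp [List.length_take]; omega
        exact List.ne_nil_of_length_pos this
      rw [show (S :: rest).take (k + 1 + 1) = S :: rest.take (k + 1) by simp]
      rw [nested_cons a p S rest hrest, nested_cons a _ S _ htake,
        ih k hk x hM']

lemma extMonomial_update (S : Finset V) (a x : V → ZMod 2) (v : V) (hv : v ∉ S)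
    (c : ZMod 2) : extMonomial S a (Function.update x v c) = extMonomial S a x := by
  refine Finset.prod_congr rfl fun u hu => ?_
  rw [Function.update_of_ne (by rintro rfl; exact hv hu)]

lemma nested_update {v : V} (a : V → ZMod 2) (p : (V → ZMod 2) → ZMod 2)
    (hp : ∀ x c, p (Function.update x v c) = p x) :
    ∀ (l : List (Finset V)), (∀ S ∈ l, v ∉ S) → ∀ (x : V → ZMod 2) (c : ZMod 2),
    nestedLayers a p l (Function.update x v c) = nestedLayers a p l x := by
  intro l
  induction l with
  | nil => intro _ x c; exact hp x c
  | cons S rest ih =>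
    intro hl x c
    have hvS : v ∉ S := hl S List.mem_cons_self
    cases rest with
    | nil =>
      show extMonomial S a _ * p _ = extMonomial S a _ * p _
      rw [extMonomial_update S a x v hvS, hp]
    | cons T Ss =>
      show extMonomial S a _ * (nestedLayers a p (T :: Ss) _ + 1)
        = extMonomial S a _ * (nestedLayers a p (T :: Ss) _ + 1)
      rw [extMonomial_update S a x v hvS,
        ih (fun U hU => hl U (List.mem_cons_of_mem _ hU)) x c]

lemma nested_append_last (a : V → ZMod 2) :
    ∀ (l : List (Finset V)), l ≠ [] → ∀ (S : Finset V) (x : V → ZMod 2),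
    nestedLayers a (fun _ => 0) (l ++ [S]) x = nestedLayers a (fun _ => 1) l x := by
  intro l
  induction l with
  | nil => intro h; exact absurd rfl h
  | cons T rest ih =>
    intro _ S x
    cases rest with
    | nil =>
      show extMonomial T a x * (extMonomial S a x * 0 + 1) = extMonomial T a x * 1
      ring
    | cons U Ss =>
      rw [show (T :: U :: Ss) ++ [S] = T :: ((U :: Ss) ++ [S]) by simp]
      rw [nested_cons a _ T _ (by simp), nested_cons a _ T _ (by simp),
        ih (by simp) S x]

lemma not_essential_update {p : (V → ZMod 2) → ZMod 2} {v : V}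
    (h : ¬ EssentialIn p v) (x : V → ZMod 2) (c : ZMod 2) :
    p (Function.update x v c) = p x := by
  simp only [EssentialIn, not_exists, not_not] at h
  rcases (by decide : ∀ z w : ZMod 2, w = z ∨ w = z + 1) (x v) c with hc | hc
  · rw [hc, Function.update_eq_self]
  · rw [hc]; exact (h x).symm

end Aux

/-- If the variable `j` appears in layer `Mᵢ` of the stratified
representation of `f` (with factor `(x_j + a_j)`), then the restriction of `f` to
`x_j = a_j` is the nested form of the more dominant layers only (with the `i`-th layer
annihilated), so it is independent of every other variable of `Mᵢ`, of all variables
of less dominant layers, and of all variables of the core polynomial `p_C`. In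
particular, if `Mᵢ` is the most dominant layer, the restriction is the constant `q`.
(Layers are indexed from `0` here, so layer `i` is the paper's `M_{i+1}`.) -/
theorem stmt_9 (n : ℕ) (f : (Fin n → ZMod 2) → ZMod 2) (hf : f ≠ fun _ => 0)
    (L : List (Finset (Fin n))) (a : Fin n → ZMod 2)
    (p : (Fin n → ZMod 2) → ZMod 2) (q : ZMod 2)
    (h : IsStratification f L a p q)
    (i : ℕ) (hi : i < L.length) (j : Fin n) (hj : j ∈ L.get ⟨i, hi⟩) :
    -- the restriction equals the nested form of the layers up to `i`, with the
    -- innermost layer multiplied by the constant `0`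
    (∀ x, f (Function.update x j (a j)) =
      nestedLayers a (fun _ => 0) (L.take (i + 1)) (Function.update x j (a j)) + q) ∧
    -- the restriction is independent of `Mᵢ ∖ {x_j}`, of all less dominant layers,
    -- and of the core polynomial's variables
    (∀ v : Fin n,
      ((v ∈ L.get ⟨i, hi⟩ ∧ v ≠ j) ∨
        (∃ (i' : ℕ) (hi' : i' < L.length), i < i' ∧ v ∈ L.get ⟨i', hi'⟩) ∨
        EssentialIn p v) →
      ¬ EssentialIn (fun x => f (Function.update x j (a j))) v) ∧
    -- if `j` lies in the most dominant layer, the restriction is the constant `q`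
    (i = 0 → (fun x => f (Function.update x j (a j))) = fun _ => q) := by
  obtain ⟨hne, hdisj, hind, hcore, he1, he2, he3, hfe⟩ := h
  have hMzero : ∀ x : Fin n → ZMod 2, x j = a j →
      extMonomial (L.get ⟨i, hi⟩) a x = 0 := by
    intro x hx
    refine Finset.prod_eq_zero hj ?_
    rw [hx]
    exact CharTwo.add_self_eq_zero _
  have part1 : ∀ x, f (Function.update x j (a j)) =
      nestedLayers a (fun _ => 0) (L.take (i + 1)) (Function.update x j (a j)) + q := by
    intro x
    rw [hfe]
    simp only
    congr 1
    exact nested_zero_of_monomial_zero a p L i hi _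
      (hMzero _ (Function.update_self _ _ _))
  have part3 : i = 0 → (fun x => f (Function.update x j (a j))) = fun _ => q := by
    intro hi0
    subst hi0
    funext x
    rw [part1 x]
    have htake1 : L.take 1 = [L.get ⟨0, hi⟩] := by
      cases L with
      | nil => simp at hi
      | cons S rest => simp [List.get]
    rw [htake1]
    show extMonomial _ a _ * 0 + q = q
    ring
  refine ⟨part1, ?_, part3⟩
  intro v hv
  have hdisj' : ∀ k m (hk : k < L.length) (hm : m < L.length), k < m →
      Disjoint (L.get ⟨k, hk⟩) (L.get ⟨m, hm⟩) := by
    intro k m hk hm hkm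
    exact List.pairwise_iff_get.mp hdisj ⟨k, hk⟩ ⟨m, hm⟩ hkm
  -- v is not in any layer strictly more dominant than layer i
  have hnot : ∀ S ∈ L.take i, v ∉ S := by
    intro S hS
    rw [List.mem_iff_get] at hS
    obtain ⟨m, hm⟩ := hS
    have hmlt : (m : ℕ) < i := by
      have := m.isLt
      simp [List.length_take] at this
      omega
    have hmL : (m : ℕ) < L.length := lt_of_lt_of_le hmlt (le_of_lt hi)
    have hSget : S = L.get ⟨m, hmL⟩ := by
      rw [← hm]
      simp [List.get_eq_getElem, List.getElem_take]
    subst hSget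
    rcases hv with ⟨hvS, _⟩ | ⟨i', hi', hlt, hvS⟩ | hvp
    · exact fun hvm => (Finset.disjoint_left.mp (hdisj' m i hmL hi hmlt) hvm) hvS
    · exact fun hvm =>
        (Finset.disjoint_left.mp (hdisj' m i' hmL hi' (lt_trans hmlt hlt)) hvm) hvS
    · exact fun hvm => hind _ (List.get_mem L _) v hvm hvp
  have hvj : v ≠ j := by
    rcases hv with ⟨_, hvj⟩ | ⟨i', hi', hlt, hvS⟩ | hvp
    · exact hvj
    · rintro rfl
      exact (Finset.disjoint_left.mp (hdisj' i i' hi hi' hlt) hj) hvS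
    · rintro rfl
      exact hind _ (List.get_mem L _) _ hj hvp
  rintro ⟨x, hx⟩
  apply hx
  by_cases hi0 : i = 0
  · have h3 := part3 hi0
    rw [h3]
  · have hipos : 0 < i := Nat.pos_of_ne_zero hi0
    have htake : L.take (i + 1) = L.take i ++ [L.get ⟨i, hi⟩] := by
      rw [← List.take_concat_get' L i hi]
      rfl
    have htne : L.take i ≠ [] := by
      apply List.ne_nil_of_length_pos
      simp [List.length_take]
      omega
    show f (Function.update x j (a j))
      = f (Function.update (Function.update x v (x v + 1)) j (a j))
    rw [part1 x, part1 (Function.update x v (x v + 1)), htake,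
      nested_append_last a _ htne, nested_append_last a _ htne]
    congr 1
    rw [Function.update_comm hvj,
      nested_update a (fun _ => 1) (fun _ _ => rfl) (L.take i) hnot]
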